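/- arXiv:2309.05470 — 5 statements merged into one kernel-verified Lean document; each statement's English description precedes it below -/
import Mathlib

section
/- Let q be a prime power, N, m positive integers, and u_1,...,u_m elements of the algebraic closure of F_q whose minimal polynomials over F_q are pairwise distinct. Let k_i = [F_q(u_i) : F_q], and for each i let A(u_i) be the k_i × N matrix over F_q whose j-th column expresses u_i^{j-1} in the basis 1, u_i, ..., u_i^{k_i - 1} of F_q(u_i). Then the block matrix obtained by stacking A(u_1), ..., A(u_m) vertically has rank equal to min(k_1 + ... + k_m, N). -/
open Matrix Polynomial

/-- Let `F` be a finite field, `u₁,…,u_m` elements of its algebraic closure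
with pairwise distinct minimal polynomials, `kᵢ = [F(uᵢ) : F]` and `A(uᵢ)` the `kᵢ × N`
matrix over `F` expressing the powers `uᵢ^0, …, uᵢ^{N-1}` in the basis `1, uᵢ, …, uᵢ^{kᵢ-1}`.
Then the vertically stacked matrix has rank `min (k₁ + ⋯ + k_m) N`. -/
theorem stmt_0 (F : Type*) [Field F] [Fintype F] (N m : ℕ) (hN : 0 < N) (hm : 0 < m)
    (u : Fin m → AlgebraicClosure F)
    (hdist : ∀ i j : Fin m, minpoly F (u i) = minpoly F (u j) → i = j)
    (k : Fin m → ℕ) (hk : ∀ i, k i = (minpoly F (u i)).natDegree)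
    (A : (i : Fin m) → Matrix (Fin (k i)) (Fin N) F)
    (hA : ∀ (i : Fin m) (j : Fin N),
      u i ^ (j : ℕ) = ∑ l : Fin (k i), algebraMap F (AlgebraicClosure F) (A i l j) * u i ^ (l : ℕ)) :
    (Matrix.of (fun p : Σ i : Fin m, Fin (k i) => fun j : Fin N => A p.1 p.2 j)).rank
      = min (∑ i, k i) N := by
  classical
  have hint : ∀ i, IsIntegral F (u i) := fun i => Algebra.IsIntegral.isIntegral _
  have hmono : ∀ i, (minpoly F (u i)).Monic := fun i => minpoly.monic (hint i)
  have hne : ∀ i, minpoly F (u i) ≠ 0 := fun i => minpoly.ne_zero (hint i)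
  have hirr : ∀ i, Irreducible (minpoly F (u i)) := fun i => minpoly.irreducible (hint i)
  set P : Polynomial F := ∏ i, minpoly F (u i) with hPdef
  have hPne : P ≠ 0 := Finset.prod_ne_zero_iff.mpr fun i _ => hne i
  set d : ℕ := ∑ i, k i with hddef
  have hPdeg : P.natDegree = d := by
    rw [hPdef, Polynomial.natDegree_prod _ _ fun i _ => hne i]
    exact Finset.sum_congr rfl fun i _ => (hk i).symm
  have hcop : Pairwise (Function.onFun IsCoprime fun i => minpoly F (u i)) := by
    intro i j hij
    rcases (hirr i).isCoprime_or_dvd (minpoly F (u j)) with h | h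
    · exact h
    · exact absurd (hdist i j (Polynomial.eq_of_monic_of_associated (hmono i) (hmono j)
        ((hirr i).associated_of_dvd (hirr j) h))) hij
  have hPdvd : ∀ p : Polynomial F, (∀ i, Polynomial.aeval (u i) p = 0) ↔ P ∣ p := by
    intro p
    constructor
    · intro h
      exact Fintype.prod_dvd_of_coprime hcop fun i => minpoly.dvd F (u i) (h i)
    · rintro ⟨q, hq⟩ i
      rw [hq, _root_.map_mul, hPdef, map_prod,
        Finset.prod_eq_zero (Finset.mem_univ i) (minpoly.aeval F (u i)), zero_mul]
  set M := Matrix.of (fun p : Σ i : Fin m, Fin (k i) => fun j : Fin N => A p.1 p.2 j) with hM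
  have hLI : ∀ i, LinearIndependent F fun l : Fin (k i) => u i ^ (l : ℕ) := by
    intro i
    have h1 := linearIndependent_pow (K := F) (S := AlgebraicClosure F) (u i)
    have h2 := h1.comp (Fin.cast (hk i)) (Fin.cast_injective _)
    exact h2
  -- key identity
  have hkey : ∀ (v : Fin N → F) (i : Fin m),
      ∑ j : Fin N, v j • u i ^ (j : ℕ)
        = ∑ l : Fin (k i), (∑ j : Fin N, A i l j * v j) • u i ^ (l : ℕ) := by
    intro v i
    calc ∑ j : Fin N, v j • u i ^ (j : ℕ)
        = ∑ j : Fin N, ∑ l : Fin (k i), (A i l j * v j) • u i ^ (l : ℕ) := by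
          refine Finset.sum_congr rfl fun j _ => ?_
          rw [hA i j, Finset.smul_sum]
          refine Finset.sum_congr rfl fun l _ => ?_
          rw [← Algebra.smul_def, smul_smul, mul_comm (v j)]
      _ = ∑ l : Fin (k i), (∑ j : Fin N, A i l j * v j) • u i ^ (l : ℕ) := by
          rw [Finset.sum_comm]
          exact Finset.sum_congr rfl fun l _ => by rw [Finset.sum_smul]
  have hker : ∀ v : Fin N → F, v ∈ LinearMap.ker M.mulVecLin ↔
      ∀ i, ∑ j : Fin N, v j • u i ^ (j : ℕ) = 0 := by
    intro v
    rw [LinearMap.mem_ker]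
    constructor
    · intro h i
      rw [hkey v i]
      refine Finset.sum_eq_zero fun l _ => ?_
      have := congrFun h ⟨i, l⟩
      simp only [Matrix.mulVecLin_apply, Matrix.mulVec, dotProduct, hM,
        Matrix.of_apply, Pi.zero_apply] at this
      rw [this, zero_smul]
    · intro h
      funext p
      obtain ⟨i, l⟩ := p
      have h0 := h i
      rw [hkey v i] at h0
      have := Fintype.linearIndependent_iff.mp (hLI i) _ h0 l
      simpa [Matrix.mulVecLin_apply, Matrix.mulVec, dotProduct, hM] using this
  -- sums vs aeval
  have hsum : ∀ r : Polynomial F, r ∈ degreeLT F N → ∀ x : AlgebraicClosure F,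
      ∑ j : Fin N, r.coeff (j : ℕ) • x ^ (j : ℕ) = Polynomial.aeval x r := by
    intro r hr x
    rcases eq_or_ne r 0 with rfl | hr0
    · simp
    · rw [Polynomial.aeval_eq_sum_range' ((natDegree_lt_iff_degree_lt hr0).mpr
        (mem_degreeLT.mp hr)), ← Fin.sum_univ_eq_sum_range]
  set n' : ℕ := N - d with hn'def
  let L : degreeLT F n' →ₗ[F] (Fin N → F) :=
    LinearMap.pi fun j => (Polynomial.lcoeff F (j : ℕ)).comp
      ((LinearMap.mulLeft F P).comp (Submodule.subtype _))
  have hLapp : ∀ (q : degreeLT F n') (j : Fin N), L q j = (P * (q : Polynomial F)).coeff j :=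
    fun q j => rfl
  have hmemN : ∀ q : Polynomial F, q ∈ degreeLT F n' → P * q ∈ degreeLT F N := by
    intro q hq
    rcases eq_or_ne q 0 with rfl | hq0
    · simpa [mem_degreeLT] using WithBot.bot_lt_coe N
    · have hq' : q.natDegree < n' := (natDegree_lt_iff_degree_lt hq0).mpr (mem_degreeLT.mp hq)
      have hPq : P * q ≠ 0 := mul_ne_zero hPne hq0
      rw [mem_degreeLT, ← natDegree_lt_iff_degree_lt hPq, Polynomial.natDegree_mul hPne hq0,
        hPdeg]
      omega
  have hLinj : Function.Injective L := by
    intro q1 q2 hq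
    have h0 : ∀ j : Fin N, (P * ((q1 : Polynomial F) - q2)).coeff j = 0 := by
      intro j
      have := congrFun hq j
      rw [hLapp, hLapp] at this
      rw [mul_sub, Polynomial.coeff_sub, this, sub_self]
    have hmem : P * ((q1 : Polynomial F) - q2) ∈ degreeLT F N :=
      hmemN _ (Submodule.sub_mem _ q1.2 q2.2)
    have hz : P * ((q1 : Polynomial F) - q2) = 0 := by
      ext n
      rcases lt_or_ge n N with hn | hn
      · simpa using h0 ⟨n, hn⟩
      · exact Polynomial.coeff_eq_zero_of_degree_lt
          (lt_of_lt_of_le (mem_degreeLT.mp hmem) (by exact_mod_cast Nat.cast_le.mpr hn))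
    rcases mul_eq_zero.mp hz with h | h
    · exact absurd h hPne
    · exact Subtype.ext (sub_eq_zero.mp h)
  have hrange : LinearMap.range L = LinearMap.ker M.mulVecLin := by
    ext v
    constructor
    · rintro ⟨q, rfl⟩
      rw [hker]
      intro i
      have := hsum (P * (q : Polynomial F)) (hmemN _ q.2) (u i)
      simp only [hLapp]
      rw [this, (hPdvd _).mpr ⟨q, rfl⟩ i]
    · intro hv
      set p : degreeLT F N := (degreeLTEquiv F N).symm v with hp
      have hco : ∀ j : Fin N, (p : Polynomial F).coeff (j : ℕ) = v j := by
        intro j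
        exact congrFun ((degreeLTEquiv F N).apply_symm_apply v) j
      have haev : ∀ i, Polynomial.aeval (u i) (p : Polynomial F) = 0 := by
        intro i
        rw [← hsum _ p.2 (u i)]
        rw [hker] at hv
        rw [← hv i]
        exact Finset.sum_congr rfl fun j _ => by rw [hco j]
      obtain ⟨q, hq⟩ := (hPdvd _).mp haev
      have hqmem : q ∈ degreeLT F n' := by
        rcases eq_or_ne q 0 with rfl | hq0
        · exact Submodule.zero_mem _
        · have hp0 : (p : Polynomial F) ≠ 0 := by
            intro h
            rw [h] at hq
            exact hq0 ((mul_eq_zero.mp hq.symm).resolve_left hPne)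
          have hdeg : (p : Polynomial F).natDegree < N :=
            (natDegree_lt_iff_degree_lt hp0).mpr (mem_degreeLT.mp p.2)
          rw [hq, Polynomial.natDegree_mul hPne hq0, hPdeg] at hdeg
          rw [mem_degreeLT, ← natDegree_lt_iff_degree_lt hq0]
          exact_mod_cast (by omega : q.natDegree < n')
      refine ⟨⟨q, hqmem⟩, ?_⟩
      funext j
      rw [hLapp]
      simp only [← hq]
      exact hco j
  have hfr : Module.finrank F (LinearMap.ker M.mulVecLin) = n' := by
    rw [← hrange, LinearMap.finrank_range_of_inj hLinj,
      (degreeLTEquiv F n').finrank_eq, Module.finrank_fin_fun]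
  have hrn := LinearMap.finrank_range_add_finrank_ker M.mulVecLin
  rw [hfr, Module.finrank_fin_fun] at hrn
  have hrank : M.rank = Module.finrank F (LinearMap.range M.mulVecLin) := rfl
  rw [hrank]
  omega
end

section
/- Let F be a field and K/F a finite Galois extension with Galois group G = {g_1, ..., g_n}. An element α ∈ K is normal over F (i.e., {g(α) : g ∈ G} is an F-basis of K) if and only if the group determinant det(X_{g_i g_j^{-1}}) evaluated at X_g = g(α) for each g ∈ G is nonzero; that is, if and only if det(g_i g_j^{-1}(α))_{i,j} ≠ 0. -/
/-- let `K/F` be a finite Galois extension with Galois group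
`G = {g₁, …, g_n}` (enumerated by `e : Fin n ≃ G`).  An element `α ∈ K` is normal over `F`
(its conjugates `g(α)`, `g ∈ G`, form an `F`-basis of `K`) iff the group determinant
evaluated at the conjugates, `det (gᵢ gⱼ⁻¹ (α))_{i,j}`, is nonzero. -/
theorem stmt_3 (F K : Type*) [Field F] [Field K] [Algebra F K]
    [FiniteDimensional F K] [IsGalois F K] (n : ℕ)
    (e : Fin n ≃ (K ≃ₐ[F] K)) (α : K) :
    (LinearIndependent F (fun g : K ≃ₐ[F] K => g α) ∧
        Submodule.span F (Set.range fun g : K ≃ₐ[F] K => g α) = ⊤) ↔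
      Matrix.det (Matrix.of fun i j : Fin n => (e i * (e j)⁻¹) α) ≠ 0 := by
  set M : Matrix (Fin n) (Fin n) K := Matrix.of fun i j : Fin n => (e i * (e j)⁻¹) α with hM
  constructor
  · rintro ⟨hli, hsp⟩ hdet
    obtain ⟨v, hv0, hv⟩ := Matrix.exists_vecMul_eq_zero_iff.mpr hdet
    set f : K →ₗ[F] K := ∑ i, v i • ((e i).toLinearMap) with hf
    have hfapp : ∀ x, f x = ∑ i, v i * (e i) x := by
      intro x
      simp [hf, LinearMap.sum_apply, smul_eq_mul]
    have hconj : ∀ g : K ≃ₐ[F] K, f (g α) = 0 := by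
      intro g
      obtain ⟨j, rfl⟩ : ∃ j, (e j)⁻¹ = g := ⟨e.symm g⁻¹, by simp⟩
      have := congrFun hv j
      simpa [Matrix.vecMul, dotProduct, hfapp, hM] using this
    have hf0 : f = 0 := by
      apply LinearMap.ext
      intro x
      have hx : x ∈ Submodule.span F (Set.range fun g : K ≃ₐ[F] K => g α) := by
        rw [hsp]; trivial
      refine Submodule.span_induction ?_ ?_ ?_ ?_ hx
      · rintro _ ⟨g, rfl⟩; exact hconj g
      · simp
      · intro a b _ _ ha hb; simp [ha, hb]
      · intro c a _ ha; simp [ha]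
    have hind : LinearIndependent K (fun i : Fin n => ((e i : K →* K) : K → K)) := by
      refine (linearIndependent_monoidHom K K).comp
        (fun i => ((e i : K →* K))) ?_
      intro i j hij
      apply e.injective
      ext x
      exact DFunLike.congr_fun hij x
    refine hv0 (funext fun i => Fintype.linearIndependent_iff.mp hind v ?_ i)
    funext x
    have := hfapp x
    rw [DFunLike.congr_fun hf0 x] at this
    simpa [Finset.sum_apply, smul_eq_mul] using this.symm
  · intro hdet
    have hcard : Fintype.card (K ≃ₐ[F] K) = Module.finrank F K :=
      Nat.card_eq_fintype_card.symm.trans (IsGalois.card_aut_eq_finrank F K)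
    have hli : LinearIndependent F (fun g : K ≃ₐ[F] K => g α) := by
      rw [Fintype.linearIndependent_iff]
      intro c hc g
      set w : Fin n → K := fun j => algebraMap F K (c ((e j)⁻¹)) with hw
      have hmv : M.mulVec w = 0 := by
        funext i
        have : ∑ j, (e i) ((e j)⁻¹ α) * algebraMap F K (c ((e j)⁻¹)) =
            (e i) (∑ g : K ≃ₐ[F] K, c g • g α) := by
          rw [map_sum]
          refine Fintype.sum_equiv (e.trans (Equiv.inv _)) _ _ ?_
          intro j
          simp [Algebra.smul_def, map_mul, mul_comm, AlgEquiv.commutes]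
        simpa [Matrix.mulVec, dotProduct, hM, hw, hc] using this
      have hw0 : w = 0 := by
        by_contra hw0
        exact hdet (Matrix.exists_mulVec_eq_zero_iff.mp ⟨w, hw0, hmv⟩)
      have := congrFun hw0 (e.symm g⁻¹)
      simp [hw] at this
      exact (algebraMap F K).injective (by simpa using this)
    exact ⟨hli, hli.span_eq_top_of_card_eq_finrank (by rw [hcard])⟩
end

section
/- Let f be a monic separable irreducible polynomial of degree n over a finite field F_q with a root r, so that the roots of f are r, r^q, ..., r^{q^{n-1}}. Then f is a normal polynomial over F_q (i.e., its roots form an F_q-basis of F_{q^n}) if and only if the circulant determinant Δ_n(r, r^q, ..., r^{q^{n-1}}) ≠ 0, where Δ_n(X_0, ..., X_{n-1}) is the determinant of the n×n circulant matrix with first row X_0, X_1, ..., X_{n-1}. -/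
open Polynomial

/-- let `f` be a monic separable irreducible polynomial of degree `n` over a
finite field `F` with `q` elements, with a root `r` in an extension `K` of degree `n`
(so the roots of `f` are `r, r^q, …, r^{q^{n-1}}`).  Then `f` is normal over `F`
(its roots form an `F`-basis of `K ≅ F_{q^n}`) iff the circulant determinant
`Δ_n(r, r^q, …, r^{q^{n-1}}) ≠ 0`, where the circulant matrix has `(i,j)` entry
`X_{(j-i) mod n}` with `X_k = r^{q^k}`. -/
theorem stmt_4 (F K : Type*) [Field F] [Fintype F] [Field K] [Algebra F K]
    (n : ℕ) (hn : 0 < n) (f : Polynomial F)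
    (hmonic : f.Monic) (hsep : f.Separable) (hirr : Irreducible f)
    (hdeg : f.natDegree = n) (hK : Module.finrank F K = n)
    (r : K) (hr : Polynomial.aeval r f = 0) :
    (LinearIndependent F (fun k : Fin n => r ^ Fintype.card F ^ (k : ℕ)) ∧
        Submodule.span F (Set.range fun k : Fin n => r ^ Fintype.card F ^ (k : ℕ)) = ⊤) ↔
      Matrix.det (Matrix.of fun i j : Fin n =>
          r ^ Fintype.card F ^ (((j : ℕ) + n - (i : ℕ)) % n)) ≠ 0 := by
  classical
  clear hmonic hsep hirr hdeg hr
  set q := Fintype.card F with hq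
  have hq1 : 1 < q := Fintype.one_lt_card
  have hfd : FiniteDimensional F K := FiniteDimensional.of_finrank_pos (by rw [hK]; exact hn)
  have hfinK : Finite K := Module.finite_of_finite F
  cases nonempty_fintype K
  have hcardK : Fintype.card K = q ^ n := by
    rw [← hK]; exact Module.card_eq_pow_finrank
  -- `x ^ q ^ n = x` for all `x : K`
  have hxqn : ∀ x : K, x ^ q ^ n = x := by
    intro x; rw [← hcardK]; exact FiniteField.pow_card x
  have hiter : ∀ (x : K) (k : ℕ), x ^ q ^ (n * k) = x := by
    intro x k
    induction k with
    | zero => simp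
    | succ k ih => rw [Nat.mul_succ, pow_add, pow_mul, ih, hxqn]
  have hmod : ∀ (x : K) (m : ℕ), x ^ q ^ m = x ^ q ^ (m % n) := by
    intro x m
    conv_lhs => rw [← Nat.div_add_mod m n]
    rw [pow_add, pow_mul, hiter]
  -- rewrite the matrix entries
  set M : Matrix (Fin n) (Fin n) K := Matrix.of fun i j : Fin n =>
      r ^ q ^ (((j : ℕ) + n - (i : ℕ)) % n) with hMdef
  have hM : ∀ i j : Fin n, M i j = (r ^ q ^ (j : ℕ)) ^ q ^ (n - (i : ℕ)) := by
    intro i j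
    have hij : (j : ℕ) + n - (i : ℕ) = (j : ℕ) + (n - (i : ℕ)) := by
      have := i.isLt; omega
    rw [hMdef, Matrix.of_apply, ← pow_mul, ← pow_add, hmod r ((j : ℕ) + (n - (i : ℕ))), hij]
  -- characteristic facts
  obtain ⟨m, hp, hqm⟩ := FiniteField.card F (ringChar F)
  haveI : CharP K (ringChar F) := charP_of_injective_algebraMap (algebraMap F K).injective _
  haveI : Fact (ringChar F).Prime := ⟨hp⟩
  have hadd : ∀ (a : ℕ) (x y : K), (x + y) ^ q ^ a = x ^ q ^ a + y ^ q ^ a := by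
    intro a x y
    have hqa : q ^ a = ringChar F ^ ((m : ℕ) * a) := by rw [hq, hqm, pow_mul]
    rw [hqa]
    exact add_pow_char_pow ..
  have hsmul : ∀ (a : ℕ) (c : F) (x : K), (c • x) ^ q ^ a = c • x ^ q ^ a := by
    intro a c x
    rw [Algebra.smul_def, mul_pow, ← map_pow, FiniteField.pow_card_pow, Algebra.smul_def]
  -- the `q^a`-power map as an `F`-linear map
  let φ : ℕ → K →ₗ[F] K := fun a =>
    { toFun := fun x => x ^ q ^ a
      map_add' := hadd a
      map_smul' := fun c x => hsmul a c x }
  have hφ : ∀ (a : ℕ) (x : K), φ a x = x ^ q ^ a := fun _ _ => rfl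
  constructor
  · -- normal → det ≠ 0
    rintro ⟨hli, hspan⟩ hdet0
    obtain ⟨g, hg0, hgM⟩ := Matrix.exists_vecMul_eq_zero_iff.mpr hdet0
    -- the linear functional vanishing on the spanning set
    let ψ : K →ₗ[F] K := ∑ i : Fin n, (LinearMap.mulLeft F (g i)) ∘ₗ (φ (n - (i : ℕ)))
    have hψ : ∀ x : K, ψ x = ∑ i : Fin n, g i * x ^ q ^ (n - (i : ℕ)) := by
      intro x
      simp [ψ, LinearMap.sum_apply, hφ]
    have hψv : ∀ j : Fin n, ψ (r ^ q ^ (j : ℕ)) = 0 := by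
      intro j
      have := congrFun hgM j
      simp only [Matrix.vecMul, dotProduct, Pi.zero_apply] at this
      rw [hψ]
      calc ∑ i : Fin n, g i * (r ^ q ^ (j : ℕ)) ^ q ^ (n - (i : ℕ))
          = ∑ i : Fin n, g i * M i j := by
            refine Finset.sum_congr rfl fun i _ => by rw [hM]
        _ = 0 := this
    have hψ0 : ψ = 0 := by
      apply LinearMap.ext_on hspan
      rintro x ⟨j, rfl⟩
      simpa using hψv j
    have hall : ∀ x : K, ∑ i : Fin n, g i * x ^ q ^ (n - (i : ℕ)) = 0 := by
      intro x
      rw [← hψ x, hψ0]; rfl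
    -- distinct power maps are linearly independent
    let χ : Fin n → (K →* K) := fun i => powMonoidHom (q ^ (n - (i : ℕ)))
    obtain ⟨ζ, hζ⟩ := IsCyclic.exists_generator (α := Kˣ)
    have hordζ : orderOf ζ = q ^ n - 1 := by
      rw [orderOf_eq_card_of_forall_mem_zpowers hζ, Nat.card_eq_fintype_card,
        Fintype.card_units, hcardK]
    have hkey : ∀ a b : ℕ, 0 < a → a < b → b ≤ n → (ζ : K) ^ q ^ a ≠ (ζ : K) ^ q ^ b := by
      intro a b ha hab hbn hEq
      have hEq' : ζ ^ q ^ a = ζ ^ q ^ b := Units.ext (by push_cast; exact hEq)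
      rw [pow_eq_pow_iff_modEq, hordζ] at hEq'
      have hd : (q ^ n - 1) ∣ (q ^ b - q ^ a) := (Nat.modEq_iff_dvd'
        (Nat.pow_le_pow_right (le_of_lt hq1) (le_of_lt hab))).mp hEq'
      have h1 : q ^ a < q ^ b := Nat.pow_lt_pow_right hq1 hab
      have h2 : q ^ b ≤ q ^ n := Nat.pow_le_pow_right (le_of_lt hq1) hbn
      have h3 : 2 ≤ q ^ a := by
        calc 2 ≤ q := hq1
          _ = q ^ 1 := (pow_one q).symm
          _ ≤ q ^ a := Nat.pow_le_pow_right (le_of_lt hq1) ha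
      have hle := Nat.le_of_dvd (by omega) hd
      omega
    have hinj : Function.Injective χ := by
      intro i i' h
      by_contra hne
      have hii' : (i : ℕ) ≠ (i' : ℕ) := fun hc => hne (Fin.ext hc)
      have hiv : ∀ x : K, x ^ q ^ (n - (i : ℕ)) = x ^ q ^ (n - (i' : ℕ)) := by
        intro x
        have := DFunLike.congr_fun h x
        simpa [χ, powMonoidHom] using this
      have h1 : 0 < n - (i : ℕ) := by have := i.isLt; omega
      have h1' : 0 < n - (i' : ℕ) := by have := i'.isLt; omega
      rcases lt_trichotomy (n - (i : ℕ)) (n - (i' : ℕ)) with hlt | heq | hgt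
      · exact hkey _ _ h1 hlt (by omega) (hiv ζ)
      · have := i.isLt; have := i'.isLt; omega
      · exact hkey _ _ h1' hgt (by omega) (hiv ζ).symm
    have hLI : LinearIndependent K (fun i : Fin n => ((χ i : K →* K) : K → K)) :=
      (linearIndependent_monoidHom K K).comp χ hinj
    rw [Fintype.linearIndependent_iff] at hLI
    have hgz : ∀ i, g i = 0 := by
      apply hLI
      funext x
      simpa [χ, powMonoidHom] using hall x
    exact hg0 (funext hgz)
  · -- det ≠ 0 → normal
    intro hdet
    have hli : LinearIndependent F (fun k : Fin n => r ^ q ^ (k : ℕ)) := by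
      rw [Fintype.linearIndependent_iff]
      intro c hc
      by_contra hcn
      push_neg at hcn
      obtain ⟨j0, hj0⟩ := hcn
      have hmul : M.mulVec (fun j => algebraMap F K (c j)) = 0 := by
        funext i
        have hφc := congrArg (φ (n - (i : ℕ))) hc
        rw [map_sum, map_zero] at hφc
        simp only [map_smul, hφ, hsmul] at hφc
        simp only [Matrix.mulVec, dotProduct]
        calc ∑ j : Fin n, M i j * algebraMap F K (c j)
            = ∑ j : Fin n, c j • (r ^ q ^ (j : ℕ)) ^ q ^ (n - (i : ℕ)) := by
              refine Finset.sum_congr rfl fun j _ => ?_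
              rw [hM, Algebra.smul_def, mul_comm]
          _ = 0 := hφc
      have hvne : (fun j => algebraMap F K (c j)) ≠ 0 := by
        intro hz
        exact hj0 ((_root_.map_eq_zero (algebraMap F K)).mp (congrFun hz j0))
      exact hdet (Matrix.exists_mulVec_eq_zero_iff.mp ⟨_, hvne, hmul⟩)
    refine ⟨hli, ?_⟩
    haveI : Nonempty (Fin n) := ⟨⟨0, hn⟩⟩
    exact hli.span_eq_top_of_card_eq_finrank (by simp [hK])
end

section
/- Let m divide n with n ≥ 3. Partition {0,...,n-1} into blocks I_i = {i + mj : 0 ≤ j ≤ n/m - 1} for 0 ≤ i ≤ m-1, and let S_m ≀ S_{n/m} ≤ S_n be the corresponding wreath product (permutations that permute blocks and elements within blocks). Suppose A(Y_0,...,Y_{m-1}) ∈ ℂ[Y_0,...,Y_{m-1}] satisfies A(Y_{σ(0)},...,Y_{σ(m-1)}) = ±A(Y_0,...,Y_{m-1}) for every σ ∈ S_m, and B(Z_0,...,Z_{n/m-1}) is a symmetric polynomial. Set B_i = B(X_i, X_{i+m}, ..., X_{i+(n/m-1)m}) and F = A(B_0,...,B_{m-1}) ∈ ℂ[X_0,...,X_{n-1}].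 If deg_{X_0} F(X_0, 0, ..., 0) > 0, then for any left transversal ℰ of S_m ≀ S_{n/m} in S_n of the form described (one representative per unordered partition of {0,...,n-1} into m blocks of size n/m), the product ∏_{φ ∈ ℰ} φ(F) is a symmetric polynomial in X_0, ..., X_{n-1}. -/
open MvPolynomial Equiv

/-- The injection `(i, j) ↦ i + m·j` of `Fin m × Fin (n/m)` into `Fin n` (for `m ∣ n`),
enumerating the block `I_i = {i + mj : 0 ≤ j ≤ n/m - 1}`. -/
def blockEmb (n m : ℕ) (hm : m ∣ n) (i : Fin m) (j : Fin (n / m)) : Fin n :=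
  ⟨(i : ℕ) + m * (j : ℕ), by
    have h1 : (i : ℕ) < m := i.isLt
    have h2 : (j : ℕ) + 1 ≤ n / m := j.isLt
    have h3 : m * (n / m) = n := Nat.mul_div_cancel' hm
    calc (i : ℕ) + m * (j : ℕ) < m * ((j : ℕ) + 1) := by
          have : m * ((j : ℕ) + 1) = m * (j : ℕ) + m := by ring
          omega
      _ ≤ m * (n / m) := Nat.mul_le_mul_left m h2
      _ = n := h3⟩

/-- Membership in the wreath product `S_m ≀ S_{n/m} ≤ S_n`, realized as the stabilizer of the
unordered partition of `{0,…,n-1}` into the blocks `I_i = {i + mj : 0 ≤ j ≤ n/m - 1}`. -/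
def memWreath (m n : ℕ) (π : Equiv.Perm (Fin n)) : Prop :=
  ∀ x y : Fin n, ((x : ℕ) % m = (y : ℕ) % m ↔ ((π x : Fin n) : ℕ) % m = ((π y : Fin n) : ℕ) % m)

section Aux

lemma blockEmb_mod {n m : ℕ} (hm : m ∣ n) (i : Fin m) (j : Fin (n / m)) :
    ((blockEmb n m hm i j : Fin n) : ℕ) % m = i := by
  show ((i : ℕ) + m * (j : ℕ)) % m = i
  rw [Nat.add_mul_mod_self_left, Nat.mod_eq_of_lt i.isLt]

lemma blockEmb_div {n m : ℕ} (hm : m ∣ n) (hmpos : 0 < m) (i : Fin m) (j : Fin (n / m)) :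
    ((blockEmb n m hm i j : Fin n) : ℕ) / m = j := by
  show ((i : ℕ) + m * (j : ℕ)) / m = j
  rw [Nat.add_mul_div_left _ _ hmpos, Nat.div_eq_of_lt i.isLt, Nat.zero_add]

lemma blockEmb_decomp {n m : ℕ} (hm : m ∣ n) (hmpos : 0 < m) (x : Fin n) :
    blockEmb n m hm ⟨(x : ℕ) % m, Nat.mod_lt _ hmpos⟩
      ⟨(x : ℕ) / m, Nat.div_lt_div_of_lt_of_dvd hm x.isLt⟩ = x := by
  apply Fin.ext
  show (x : ℕ) % m + m * ((x : ℕ) / m) = (x : ℕ)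
  rw [Nat.mod_add_div]

lemma blockEmb_injective {n m : ℕ} (hm : m ∣ n) (hmpos : 0 < m) (i : Fin m) :
    Function.Injective (blockEmb n m hm i) := by
  intro j j' h
  have := congrArg (fun t : Fin n => (t : ℕ) / m) h
  simp only [blockEmb_div hm hmpos] at this
  exact Fin.ext this

/-- The single-variable specializations of `F` at any two variable positions agree up to sign. -/
lemma spec_pm {n m : ℕ} (hm : m ∣ n) (hmpos : 0 < m) (hNpos : 0 < n / m)
    [NeZero n] [NeZero m] [NeZero (n / m)]
    (A : MvPolynomial (Fin m) ℂ)
    (hA : ∀ σ : Equiv.Perm (Fin m), rename (⇑σ) A = A ∨ rename (⇑σ) A = -A)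
    (B : MvPolynomial (Fin (n / m)) ℂ) (hB : B.IsSymmetric) (k : Fin n) :
    MvPolynomial.aeval (fun x : Fin n => if x = k then (Polynomial.X : Polynomial ℂ) else 0)
      (MvPolynomial.aeval
        (fun i : Fin m => MvPolynomial.rename (fun j : Fin (n / m) => blockEmb n m hm i j) B) A)
    = MvPolynomial.aeval (fun x : Fin n => if x = 0 then (Polynomial.X : Polynomial ℂ) else 0)
      (MvPolynomial.aeval
        (fun i : Fin m => MvPolynomial.rename (fun j : Fin (n / m) => blockEmb n m hm i j) B) A)
    ∨ MvPolynomial.aeval (fun x : Fin n => if x = k then (Polynomial.X : Polynomial ℂ) else 0)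
      (MvPolynomial.aeval
        (fun i : Fin m => MvPolynomial.rename (fun j : Fin (n / m) => blockEmb n m hm i j) B) A)
    = - MvPolynomial.aeval (fun x : Fin n => if x = 0 then (Polynomial.X : Polynomial ℂ) else 0)
      (MvPolynomial.aeval
        (fun i : Fin m => MvPolynomial.rename (fun j : Fin (n / m) => blockEmb n m hm i j) B) A)
      := by
  set G : Fin m → MvPolynomial (Fin n) ℂ :=
    fun i => MvPolynomial.rename (fun j : Fin (n / m) => blockEmb n m hm i j) B with hG
  set b : Polynomial ℂ :=
    MvPolynomial.aeval (fun j : Fin (n / m) => if j = 0 then (Polynomial.X : Polynomial ℂ) else 0)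
      B with hb
  set c : Polynomial ℂ := MvPolynomial.aeval (fun _ : Fin (n / m) => (0 : Polynomial ℂ)) B with hc
  -- reduction of a single-variable specialization to an evaluation of `A`
  have main : ∀ k : Fin n,
      MvPolynomial.aeval (fun x : Fin n => if x = k then (Polynomial.X : Polynomial ℂ) else 0)
        (MvPolynomial.aeval G A)
      = MvPolynomial.aeval
          (fun i : Fin m =>
            if i = (⟨(k : ℕ) % m, Nat.mod_lt _ hmpos⟩ : Fin m) then b else c) A := by
    intro k
    set r : Fin m := ⟨(k : ℕ) % m, Nat.mod_lt _ hmpos⟩ with hr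
    set q : Fin (n / m) := ⟨(k : ℕ) / m, Nat.div_lt_div_of_lt_of_dvd hm k.isLt⟩ with hq
    set v : Fin n → Polynomial ℂ :=
      fun x => if x = k then (Polynomial.X : Polynomial ℂ) else 0 with hv
    rw [comp_aeval_apply]
    have hfun : (fun i : Fin m => MvPolynomial.aeval v (G i))
        = fun i : Fin m => if i = r then b else c := by
      funext i
      rw [hG]
      show MvPolynomial.aeval v (MvPolynomial.rename (fun j => blockEmb n m hm i j) B) = _
      rw [aeval_rename]
      by_cases hi : i = r
      · subst hi
        have h1 : v ∘ (fun j => blockEmb n m hm r j)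
            = fun j : Fin (n / m) => if j = q then (Polynomial.X : Polynomial ℂ) else 0 := by
          funext j
          by_cases hj : j = q
          · subst hj
            have : blockEmb n m hm r q = k := blockEmb_decomp hm hmpos k
            simp [hv, this]
          · have hne : blockEmb n m hm r j ≠ k := by
              intro h
              apply hj
              apply Fin.ext
              have := congrArg (fun t : Fin n => (t : ℕ) / m) h
              simpa [blockEmb_div hm hmpos] using this
            simp [hv, hne, hj]
        rw [h1]
        -- use symmetry of B to move the distinguished slot from `q` to `0`
        have hswap := hB (Equiv.swap (0 : Fin (n / m)) q)
        have : MvPolynomial.aeval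
              (fun j : Fin (n / m) => if j = q then (Polynomial.X : Polynomial ℂ) else 0) B
            = MvPolynomial.aeval
              (fun j : Fin (n / m) => if j = q then (Polynomial.X : Polynomial ℂ) else 0)
              (MvPolynomial.rename (⇑(Equiv.swap (0 : Fin (n / m)) q)) B) := by rw [hswap]
        rw [this, aeval_rename]
        simp only [if_pos]
        have h2 : (fun j : Fin (n / m) => if j = q then (Polynomial.X : Polynomial ℂ) else 0)
              ∘ ⇑(Equiv.swap (0 : Fin (n / m)) q)
            = fun j : Fin (n / m) => if j = 0 then (Polynomial.X : Polynomial ℂ) else 0 := by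
          funext j
          have : Equiv.swap (0 : Fin (n / m)) q j = q ↔ j = 0 := by
            rw [Equiv.swap_apply_eq_iff, Equiv.swap_apply_right]
          simp only [Function.comp_apply]
          by_cases hj : j = 0
          · rw [if_pos (this.2 hj), if_pos hj]
          · rw [if_neg (fun h => hj (this.1 h)), if_neg hj]
        rw [h2, ← hb]
      · have h1 : v ∘ (fun j => blockEmb n m hm i j)
            = fun _ : Fin (n / m) => (0 : Polynomial ℂ) := by
          funext j
          have hne : blockEmb n m hm i j ≠ k := by
            intro h
            apply hi
            apply Fin.ext
            have := congrArg (fun t : Fin n => (t : ℕ) % m) h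
            simpa [blockEmb_mod hm] using this
          simp [hv, hne]
        rw [h1, if_neg hi, ← hc]
    rw [hfun]
  have h0 : (⟨((0 : Fin n) : ℕ) % m, Nat.mod_lt _ hmpos⟩ : Fin m) = 0 := by
    apply Fin.ext
    simp
  set r : Fin m := ⟨(k : ℕ) % m, Nat.mod_lt _ hmpos⟩ with hr
  rw [main k, main 0, h0]
  -- now use the ± symmetry of A under the swap (0, r)
  have hswapA := hA (Equiv.swap (0 : Fin m) r)
  set u : Fin m → Polynomial ℂ := fun i => if i = r then b else c with hu
  have hcomp : u ∘ ⇑(Equiv.swap (0 : Fin m) r)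
      = fun i : Fin m => if i = 0 then b else c := by
    funext i
    have : Equiv.swap (0 : Fin m) r i = r ↔ i = 0 := by
      rw [Equiv.swap_apply_eq_iff, Equiv.swap_apply_right]
    simp only [Function.comp_apply, hu]
    by_cases hi : i = 0
    · rw [if_pos (this.2 hi), if_pos hi]
    · rw [if_neg (fun h => hi (this.1 h)), if_neg hi]
  have key : MvPolynomial.aeval (fun i : Fin m => if i = 0 then b else c) A
      = MvPolynomial.aeval u (MvPolynomial.rename (⇑(Equiv.swap (0 : Fin m) r)) A) := by
    rw [aeval_rename, hcomp]
  rcases hswapA with h | h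
  · left
    rw [key, h]
  · right
    rw [key, h, map_neg, neg_neg]

/-- Renaming by an element of the wreath product changes `F` at most by a sign. -/
lemma wreath_pm {n m : ℕ} (hm : m ∣ n) (hmpos : 0 < m) (hNpos : 0 < n / m)
    (A : MvPolynomial (Fin m) ℂ)
    (hA : ∀ σ : Equiv.Perm (Fin m), rename (⇑σ) A = A ∨ rename (⇑σ) A = -A)
    (B : MvPolynomial (Fin (n / m)) ℂ) (hB : B.IsSymmetric)
    (w : Equiv.Perm (Fin n)) (hw : memWreath m n w) :
    MvPolynomial.rename ⇑w (MvPolynomial.aeval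
        (fun i : Fin m => MvPolynomial.rename (fun j : Fin (n / m) => blockEmb n m hm i j) B) A)
      = MvPolynomial.aeval
        (fun i : Fin m => MvPolynomial.rename (fun j : Fin (n / m) => blockEmb n m hm i j) B) A
    ∨ MvPolynomial.rename ⇑w (MvPolynomial.aeval
        (fun i : Fin m => MvPolynomial.rename (fun j : Fin (n / m) => blockEmb n m hm i j) B) A)
      = - MvPolynomial.aeval
        (fun i : Fin m => MvPolynomial.rename (fun j : Fin (n / m) => blockEmb n m hm i j) B) A := by
  set G : Fin m → MvPolynomial (Fin n) ℂ :=
    fun i => MvPolynomial.rename (fun j : Fin (n / m) => blockEmb n m hm i j) B with hG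
  set j0 : Fin (n / m) := ⟨0, hNpos⟩ with hj0
  -- the induced permutation of blocks
  set f : Fin m → Fin m :=
    fun i => ⟨((w (blockEmb n m hm i j0) : Fin n) : ℕ) % m, Nat.mod_lt _ hmpos⟩ with hf
  have hres : ∀ (i : Fin m) (j : Fin (n / m)),
      ((w (blockEmb n m hm i j) : Fin n) : ℕ) % m = (f i : ℕ) := by
    intro i j
    exact (hw (blockEmb n m hm i j) (blockEmb n m hm i j0)).mp
      (by rw [blockEmb_mod hm, blockEmb_mod hm])
  have hfinj : Function.Injective f := by
    intro i i' h
    have h2 : ((w (blockEmb n m hm i j0) : Fin n) : ℕ) % m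
        = ((w (blockEmb n m hm i' j0) : Fin n) : ℕ) % m := congrArg Fin.val h
    have h3 := (hw _ _).mpr h2
    rw [blockEmb_mod hm, blockEmb_mod hm] at h3
    exact Fin.ext h3
  set σb : Equiv.Perm (Fin m) := Equiv.ofBijective f (Finite.injective_iff_bijective.mp hfinj)
    with hσb
  have hσbap : ∀ i, σb i = f i := fun i => rfl
  -- within-block permutations
  set pg : Fin m → Fin (n / m) → Fin (n / m) :=
    fun i j => ⟨((w (blockEmb n m hm i j) : Fin n) : ℕ) / m,
      Nat.div_lt_div_of_lt_of_dvd hm (w (blockEmb n m hm i j)).isLt⟩ with hpg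
  have hkey : ∀ i : Fin m, ⇑w ∘ (fun j => blockEmb n m hm i j)
      = (fun j => blockEmb n m hm (σb i) j) ∘ pg i := by
    intro i
    funext j
    apply Fin.ext
    show ((w (blockEmb n m hm i j) : Fin n) : ℕ)
      = ((σb i : Fin m) : ℕ) + m * ((pg i j : Fin (n / m)) : ℕ)
    rw [hσbap]
    show _ = (f i : ℕ) + m * (((w (blockEmb n m hm i j) : Fin n) : ℕ) / m)
    rw [← hres i j, Nat.mod_add_div]
  have hpginj : ∀ i, Function.Injective (pg i) := by
    intro i j j' h
    have h1 : blockEmb n m hm (σb i) (pg i j) = blockEmb n m hm (σb i) (pg i j') := by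
      rw [h]
    rw [← Function.comp_apply (f := blockEmb n m hm (σb i)), ← Function.comp_apply
      (f := blockEmb n m hm (σb i)), ← hkey i] at h1
    exact blockEmb_injective hm hmpos i (w.injective h1)
  have hGi : ∀ i, MvPolynomial.rename ⇑w (G i) = G (σb i) := by
    intro i
    show MvPolynomial.rename ⇑w (MvPolynomial.rename (fun j => blockEmb n m hm i j) B) = _
    rw [rename_rename, hkey i]
    have : MvPolynomial.rename ((fun j => blockEmb n m hm (σb i) j) ∘ pg i) B
        = MvPolynomial.rename (fun j => blockEmb n m hm (σb i) j)
          (MvPolynomial.rename (pg i) B) := by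
      rw [rename_rename]
    rw [this]
    have hperm : MvPolynomial.rename (pg i) B = B := by
      have := hB (Equiv.ofBijective (pg i) (Finite.injective_iff_bijective.mp (hpginj i)))
      exact this
    rw [hperm]
  have step1 : MvPolynomial.rename ⇑w (MvPolynomial.aeval G A)
      = MvPolynomial.aeval (fun i => G (σb i)) A := by
    rw [comp_aeval_apply]
    have hfun : (fun i => MvPolynomial.rename ⇑w (G i)) = fun i => G (σb i) := by
      funext i
      exact hGi i
    rw [hfun]
  have step2 : MvPolynomial.aeval (fun i => G (σb i)) A
      = MvPolynomial.aeval G (MvPolynomial.rename ⇑σb A) := by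
    rw [aeval_rename]
    rfl
  rcases hA σb with h | h
  · left; rw [step1, step2, h]
  · right; rw [step1, step2, h, map_neg]

/-- `memWreath` is closed under inverses. -/
lemma memWreath_inv {n m : ℕ} (w : Equiv.Perm (Fin n)) (hw : memWreath m n w) :
    memWreath m n w⁻¹ := by
  intro x y
  have := hw (w⁻¹ x) (w⁻¹ y)
  simp only [Equiv.Perm.inv_def, Equiv.apply_symm_apply] at this
  exact this.symm

end Aux

/-- let `m ∣ n`, `n ≥ 3`.  Suppose `A ∈ ℂ[Y₀,…,Y_{m-1}]` satisfies
`A(Y_{σ(0)},…,Y_{σ(m-1)}) = ±A` for every `σ ∈ S_m`, and `B ∈ ℂ[Z₀,…,Z_{n/m-1}]` is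
symmetric.  Set `B_i = B(X_i, X_{i+m}, …, X_{i+(n/m-1)m})` and `F = A(B₀,…,B_{m-1})`.
If `deg_{X₀} F(X₀,0,…,0) > 0`, then for any left transversal `ℰ` of `S_m ≀ S_{n/m}` in `S_n`
(one representative per left coset, i.e. per unordered partition into `m` blocks of size
`n/m`), the product `Π_{φ ∈ ℰ} φ(F)` is symmetric in `X₀,…,X_{n-1}`. -/
theorem stmt_12 (n m : ℕ) (hm : m ∣ n) (hn : 3 ≤ n)
    (A : MvPolynomial (Fin m) ℂ)
    (hA : ∀ σ : Equiv.Perm (Fin m), rename (⇑σ) A = A ∨ rename (⇑σ) A = -A)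
    (B : MvPolynomial (Fin (n / m)) ℂ) (hB : B.IsSymmetric)
    (F : MvPolynomial (Fin n) ℂ)
    (hF : F = MvPolynomial.aeval
      (fun i : Fin m => MvPolynomial.rename (fun j : Fin (n / m) => blockEmb n m hm i j) B) A)
    (hdeg : 0 < (MvPolynomial.aeval
        (fun x : Fin n => if (x : ℕ) = 0 then (Polynomial.X : Polynomial ℂ) else 0) F).natDegree)
    (E : Finset (Equiv.Perm (Fin n)))
    (hE : ∀ σ : Equiv.Perm (Fin n), ∃! τ, τ ∈ E ∧ memWreath m n (τ⁻¹ * σ)) :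
    (∏ τ ∈ E, rename (⇑τ) F).IsSymmetric := by
  have hmpos : 0 < m := by
    rcases Nat.eq_zero_or_pos m with h | h
    · subst h
      have := Nat.eq_zero_of_zero_dvd hm
      omega
    · exact h
  have hNpos : 0 < n / m := Nat.div_pos (Nat.le_of_dvd (by omega) hm) hmpos
  haveI : NeZero n := ⟨by omega⟩
  haveI : NeZero m := ⟨hmpos.ne'⟩
  haveI : NeZero (n / m) := ⟨hNpos.ne'⟩
  subst hF
  set F : MvPolynomial (Fin n) ℂ := MvPolynomial.aeval
      (fun i : Fin m => MvPolynomial.rename (fun j : Fin (n / m) => blockEmb n m hm i j) B) A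
    with hFdef
  -- the single-variable specializations of `F` are all nonzero
  have hspec0 : MvPolynomial.aeval
      (fun x : Fin n => if x = (0 : Fin n) then (Polynomial.X : Polynomial ℂ) else 0) F ≠ 0 := by
    have hfun : (fun x : Fin n => if (x : ℕ) = 0 then (Polynomial.X : Polynomial ℂ) else 0)
        = fun x : Fin n => if x = (0 : Fin n) then (Polynomial.X : Polynomial ℂ) else 0 := by
      funext x
      by_cases hx : x = 0
      · subst hx; simp
      · have : (x : ℕ) ≠ 0 := fun h => hx (by
          apply Fin.ext
          simpa using h)
        rw [if_neg this, if_neg hx]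
    intro h
    rw [hfun, h] at hdeg
    simp at hdeg
  have hspec : ∀ k : Fin n, MvPolynomial.aeval
      (fun x : Fin n => if x = k then (Polynomial.X : Polynomial ℂ) else 0) F ≠ 0 := by
    intro k
    rcases spec_pm hm hmpos hNpos A hA B hB k with h | h
    · rw [hFdef, h]
      exact hspec0
    · rw [hFdef, h]
      exact neg_ne_zero.mpr hspec0
  set P : MvPolynomial (Fin n) ℂ := ∏ τ ∈ E, rename (⇑τ) F with hP
  -- renaming by any permutation changes P at most by a sign
  have key : ∀ s : Equiv.Perm (Fin n), rename (⇑s) P = P ∨ rename (⇑s) P = -P := by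
    intro s
    have h1 : rename (⇑s) P = ∏ τ ∈ E, rename (⇑(s * τ)) F := by
      rw [hP, map_prod]
      refine Finset.prod_congr rfl fun τ _ => ?_
      rw [rename_rename]
      rfl
    have hsq : rename (⇑s) P * rename (⇑s) P = P * P := by
      rw [h1, hP, ← Finset.prod_mul_distrib, ← Finset.prod_mul_distrib]
      refine Finset.prod_bij' (fun τ _ => (hE (s * τ)).choose)
        (fun τ _ => (hE (s⁻¹ * τ)).choose) ?_ ?_ ?_ ?_ ?_
      · intro τ hτ
        exact (hE (s * τ)).choose_spec.1.1
      · intro τ hτ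
        exact (hE (s⁻¹ * τ)).choose_spec.1.1
      · intro τ hτ
        have hw := (hE (s * τ)).choose_spec.1.2
        have hmem : memWreath m n (τ⁻¹ * (s⁻¹ * (hE (s * τ)).choose)) := by
          have h' := memWreath_inv _ hw
          have heq : ((hE (s * τ)).choose⁻¹ * (s * τ))⁻¹
              = τ⁻¹ * (s⁻¹ * (hE (s * τ)).choose) := by group
          rwa [heq] at h'
        exact ((hE (s⁻¹ * (hE (s * τ)).choose)).choose_spec.2 τ ⟨hτ, hmem⟩).symm
      · intro τ hτ
        have hw := (hE (s⁻¹ * τ)).choose_spec.1.2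
        have hmem : memWreath m n (τ⁻¹ * (s * (hE (s⁻¹ * τ)).choose)) := by
          have h' := memWreath_inv _ hw
          have heq : ((hE (s⁻¹ * τ)).choose⁻¹ * (s⁻¹ * τ))⁻¹
              = τ⁻¹ * (s * (hE (s⁻¹ * τ)).choose) := by group
          rwa [heq] at h'
        exact ((hE (s * (hE (s⁻¹ * τ)).choose)).choose_spec.2 τ ⟨hτ, hmem⟩).symm
      · intro τ hτ
        have hw := (hE (s * τ)).choose_spec.1.2
        have hdecomp : rename (⇑(s * τ)) F
            = rename (⇑(hE (s * τ)).choose)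
                (rename (⇑((hE (s * τ)).choose⁻¹ * (s * τ))) F) := by
          rw [rename_rename, ← Equiv.Perm.coe_mul]
          congr 2
          group
        rcases wreath_pm hm hmpos hNpos A hA B hB _ hw with hpm | hpm
        · rw [hdecomp, ← hFdef] at *
          rw [show rename (⇑((hE (s * τ)).choose⁻¹ * (s * τ))) F = F from hpm]
        · rw [hdecomp, ← hFdef] at *
          rw [show rename (⇑((hE (s * τ)).choose⁻¹ * (s * τ))) F = -F from hpm, map_neg,
            neg_mul_neg]
    exact mul_self_eq_mul_self_iff.mp hsq
  -- renaming by a transposition fixes P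
  have swapcase : ∀ a b : Fin n, a ≠ b → rename (⇑(Equiv.swap a b)) P = P := by
    intro a b hab
    rcases key (Equiv.swap a b) with h | h
    · exact h
    · exfalso
      obtain ⟨c, hca, hcb⟩ : ∃ c : Fin n, c ≠ a ∧ c ≠ b := by
        by_contra hcon
        push_neg at hcon
        have hsub : (Finset.univ : Finset (Fin n)) ⊆ {a, b} := by
          intro x _
          by_cases hxa : x = a
          · simp [hxa]
          · simp [hcon x hxa]
        have h1 := Finset.card_le_card hsub
        have h2 : ({a, b} : Finset (Fin n)).card ≤ 2 := by
          apply le_trans (Finset.card_insert_le _ _)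
          simp
        rw [Finset.card_univ, Fintype.card_fin] at h1
        omega
      set v : Fin n → Polynomial ℂ := fun x => if x = c then (Polynomial.X : Polynomial ℂ) else 0
        with hv
      have hvswap : v ∘ ⇑(Equiv.swap a b) = v := by
        funext x
        simp only [Function.comp_apply, hv]
        have hiff : Equiv.swap a b x = c ↔ x = c := by
          constructor
          · intro h'
            have : Equiv.swap a b x = Equiv.swap a b c := by
              rw [h', Equiv.swap_apply_of_ne_of_ne hca hcb]
            exact (Equiv.swap a b).injective this
          · intro h'
            rw [h', Equiv.swap_apply_of_ne_of_ne hca hcb]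
        by_cases hx : x = c
        · rw [if_pos (hiff.2 hx), if_pos hx]
        · rw [if_neg (fun h' => hx (hiff.1 h')), if_neg hx]
      have h2 : - MvPolynomial.aeval v P = MvPolynomial.aeval v P := by
        calc - MvPolynomial.aeval v P = MvPolynomial.aeval v (-P) := (map_neg _ _).symm
          _ = MvPolynomial.aeval v (rename (⇑(Equiv.swap a b)) P) := by rw [h]
          _ = MvPolynomial.aeval (v ∘ ⇑(Equiv.swap a b)) P := by rw [aeval_rename]
          _ = MvPolynomial.aeval v P := by rw [hvswap]
      have h3 : MvPolynomial.aeval v P = 0 := by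
        have h4 : (2 : Polynomial ℂ) * MvPolynomial.aeval v P = 0 := by
          rw [two_mul]
          nth_rewrite 1 [← h2]
          exact neg_add_cancel _
        rcases mul_eq_zero.mp h4 with h' | h'
        · exact absurd h' two_ne_zero
        · exact h'
      have h5 : MvPolynomial.aeval v P ≠ 0 := by
        rw [hP, map_prod, Finset.prod_ne_zero_iff]
        intro τ _
        rw [aeval_rename]
        have hvτ : v ∘ ⇑τ = fun x : Fin n => if x = τ⁻¹ c then (Polynomial.X : Polynomial ℂ)
            else 0 := by
          funext x
          simp only [Function.comp_apply, hv]
          by_cases hx : x = τ⁻¹ c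
          · subst hx
            simp
          · have hne : τ x ≠ c := fun h' => hx (by rw [← h']; simp)
            rw [if_neg hne, if_neg hx]
        rw [hvτ]
        exact hspec _
      exact h5 h3
  intro σ
  refine Equiv.Perm.swap_induction_on σ ?_ ?_
  · show rename (⇑(1 : Equiv.Perm (Fin n))) P = P
    have : ⇑(1 : Equiv.Perm (Fin n)) = id := rfl
    rw [this, rename_id, AlgHom.id_apply]
  · intro f x y hxy hf
    show rename (⇑(Equiv.swap x y * f)) P = P
    have : (⇑(Equiv.swap x y * f) : Fin n → Fin n) = ⇑(Equiv.swap x y) ∘ ⇑f := rfl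
    rw [this, ← rename_rename, hf, swapcase x y hxy]
end

section
/- Let n be a positive integer. The circulant determinant factors as Δ_n(X_0,...,X_{n-1}) = ∏_{m | n} Ψ_m(Y_{n,0}, ..., Y_{n,m-1}), where Y_{n,i} = Σ_{j=0}^{n/m - 1} X_{i + mj} for 0 ≤ i ≤ m-1, and Ψ_m(Z_0,...,Z_{m-1}) = ∏_{i ∈ (ℤ/mℤ)^×} (Σ_{j ∈ ℤ/mℤ} ε_m^{ij} Z_j). -/
open MvPolynomial Finset

lemma aux_pow_mod {R : Type*} [CommRing R] {ζ : R} {n : ℕ} (hζ : ζ ^ n = 1) (a : ℕ) :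
    ζ ^ (a % n) = ζ ^ a := by
  conv_rhs => rw [← Nat.mod_add_div a n, pow_add, pow_mul, hζ, one_pow, mul_one]

lemma aux_det_circ {R : Type*} [CommRing R] [IsDomain R] {n : ℕ} [NeZero n]
    {ζ : R} (hζ : IsPrimitiveRoot ζ n) (v : Fin n → R) :
    (Matrix.of fun i j : Fin n => v (j - i)).det =
      ∏ k : Fin n, ∑ j : Fin n, ζ ^ ((k : ℕ) * (j : ℕ)) * v j := by
  have h1 : ζ ^ n = 1 := hζ.pow_eq_one
  set M : Matrix (Fin n) (Fin n) R := Matrix.of fun i j : Fin n => v (j - i) with hM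
  set F : Matrix (Fin n) (Fin n) R := Matrix.vandermonde (fun i : Fin n => ζ ^ (i : ℕ)) with hF
  set D : Matrix (Fin n) (Fin n) R :=
    Matrix.diagonal (fun k : Fin n => ∑ j : Fin n, ζ ^ ((k : ℕ) * (j : ℕ)) * v j) with hD
  have hFe : ∀ i j : Fin n, F i j = ζ ^ ((i : ℕ) * (j : ℕ)) := by
    intro i j; simp [hF, Matrix.vandermonde, ← pow_mul]
  have hpowmod : ∀ a : ℕ, ζ ^ (a % n) = ζ ^ a := aux_pow_mod h1
  have hcomm : M * F = F * D := by
    ext i k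
    rw [Matrix.mul_apply, hD, Matrix.mul_diagonal, hFe, Finset.mul_sum]
    refine Fintype.sum_equiv (Equiv.subRight i) _ _ ?_
    intro j
    simp only [Equiv.subRight_apply, hM, Matrix.of_apply, hFe]
    have hval : ((i : ℕ) + ((j - i : Fin n) : ℕ)) % n = (j : ℕ) := by
      have h2 : ((i + (j - i) : Fin n) : ℕ) = (j : ℕ) := by
        congr 1; simp
      rw [Fin.add_def] at h2; exact h2
    have key : ζ ^ ((j : ℕ) * (k : ℕ)) =
        ζ ^ (((i : ℕ) + ((j - i : Fin n) : ℕ)) * (k : ℕ)) := by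
      rw [pow_mul, pow_mul, ← hval, hpowmod]
    rw [key, ← mul_assoc, ← pow_add]
    ring_nf
  have hFdet : F.det ≠ 0 := by
    rw [hF, Matrix.det_vandermonde]
    refine Finset.prod_ne_zero_iff.2 fun i _ => Finset.prod_ne_zero_iff.2 fun j hj => ?_
    have hij : i < j := Finset.mem_Ioi.mp hj
    rw [sub_ne_zero]
    intro h
    exact hij.ne' (Fin.val_injective (hζ.pow_inj j.isLt i.isLt h))
  have := congrArg Matrix.det hcomm
  rw [Matrix.det_mul, Matrix.det_mul, mul_comm F.det D.det] at this
  have hMD : M.det = D.det := mul_right_cancel₀ hFdet this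
  rw [hMD, hD, Matrix.det_diagonal]


/-- factorization of the circulant determinant
`Δ_n = Π_{m ∣ n} Ψ_m(Y_{n,0}, …, Y_{n,m-1})`, where `Y_{n,i} = Σ_{j=0}^{n/m-1} X_{i+mj}`
(the sum of the `X_x` over `x ≡ i (mod m)`),
`Ψ_m(Z₀,…,Z_{m-1}) = Π_{i ∈ (ℤ/mℤ)ˣ} Σ_{j ∈ ℤ/mℤ} ε_m^{ij} Z_j` and `ε_m = e^{2πi/m}`.
Here `Δ_n` is the determinant of the `n × n` circulant matrix whose `(i,j)` entry is
`X_{(j-i) mod n}`. -/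
theorem stmt_17 (n : ℕ) (hn : 0 < n) :
    Matrix.det (Matrix.of fun i j : Fin n =>
        (X (⟨((j : ℕ) + n - (i : ℕ)) % n, Nat.mod_lt _ hn⟩ : Fin n) : MvPolynomial (Fin n) ℂ)) =
      ∏ m ∈ n.divisors,
        ∏ i ∈ (Finset.range m).filter (fun i => Nat.Coprime i m),
          ∑ j ∈ Finset.range m,
            MvPolynomial.C (Complex.exp (2 * Real.pi * Complex.I / m) ^ (i * j % m)) *
              ∑ x ∈ Finset.univ.filter (fun x : Fin n => (x : ℕ) % m = j),
                (X x : MvPolynomial (Fin n) ℂ) := by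
  have hn0 : n ≠ 0 := hn.ne'
  haveI : NeZero n := ⟨hn0⟩
  set ζ : ℂ := Complex.exp (2 * Real.pi * Complex.I / n) with hζdef
  have hprim : IsPrimitiveRoot ζ n := Complex.isPrimitiveRoot_exp n hn0
  have hprimC : IsPrimitiveRoot (MvPolynomial.C ζ : MvPolynomial (Fin n) ℂ) n :=
    hprim.map_of_injective (MvPolynomial.C_injective _ _)
  -- rewrite the matrix as a circulant in `Fin n` subtraction form
  have hmat : (Matrix.of fun i j : Fin n =>
      (X (⟨((j : ℕ) + n - (i : ℕ)) % n, Nat.mod_lt _ hn⟩ : Fin n) : MvPolynomial (Fin n) ℂ)) =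
      Matrix.of fun i j : Fin n => (X (j - i) : MvPolynomial (Fin n) ℂ) := by
    refine Matrix.ext fun i j => ?_
    simp only [Matrix.of_apply]
    congr 1
    rw [Fin.sub_def]
    have hi := i.isLt
    have hj := j.isLt
    refine Fin.ext ?_
    simp only []
    congr 1
    omega
  rw [hmat, aux_det_circ hprimC]
  -- the linear factors
  set lam : ℕ → MvPolynomial (Fin n) ℂ :=
    fun k => ∑ x : Fin n, MvPolynomial.C (ζ ^ (k * (x : ℕ))) * X x with hlam
  have hL : ∏ k : Fin n, ∑ j : Fin n,
      (MvPolynomial.C ζ : MvPolynomial (Fin n) ℂ) ^ ((k : ℕ) * (j : ℕ)) * X j =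
      ∏ k ∈ Finset.range n, lam k := by
    rw [← Fin.prod_univ_eq_prod_range (fun k => lam k) n]
    exact Fintype.prod_congr _ _ fun k => Finset.sum_congr rfl fun j _ => by rw [map_pow]
  rw [hL]
  -- Step A : each inner factor equals `lam (i * (n / m))`
  have hstepA : ∀ m : ℕ, m ∣ n → ∀ i : ℕ,
      (∑ j ∈ Finset.range m,
          MvPolynomial.C (Complex.exp (2 * Real.pi * Complex.I / m) ^ (i * j % m)) *
            ∑ x ∈ Finset.univ.filter (fun x : Fin n => (x : ℕ) % m = j),
              (X x : MvPolynomial (Fin n) ℂ)) = lam (i * (n / m)) := by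
    intro m hm i
    have hm0 : m ≠ 0 := by rintro rfl; exact hn0 (Nat.eq_zero_of_zero_dvd hm)
    have hmpos : 0 < m := Nat.pos_of_ne_zero hm0
    set ε : ℂ := Complex.exp (2 * Real.pi * Complex.I / m) with hεdef
    have hεm : ε ^ m = 1 := (Complex.isPrimitiveRoot_exp m hm0).pow_eq_one
    have hεim : (ε ^ i) ^ m = 1 := by rw [← pow_mul, mul_comm, pow_mul, hεm, one_pow]
    have hεζ : ε = ζ ^ (n / m) := by
      rw [hζdef, hεdef, ← Complex.exp_nat_mul]
      congr 1
      have hc : ((n / m : ℕ) : ℂ) = (n : ℂ) / (m : ℂ) :=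
        Nat.cast_div hm (Nat.cast_ne_zero.2 hm0)
      rw [hc]
      have hm0' : (m : ℂ) ≠ 0 := Nat.cast_ne_zero.2 hm0
      have hn0' : (n : ℂ) ≠ 0 := Nat.cast_ne_zero.2 hn0
      field_simp
    calc (∑ j ∈ Finset.range m,
          MvPolynomial.C (ε ^ (i * j % m)) *
            ∑ x ∈ Finset.univ.filter (fun x : Fin n => (x : ℕ) % m = j),
              (X x : MvPolynomial (Fin n) ℂ))
        = ∑ j ∈ Finset.range m,
            ∑ x ∈ Finset.univ.filter (fun x : Fin n => (x : ℕ) % m = j),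
              MvPolynomial.C (ε ^ (i * ((x : ℕ) % m) % m)) * X x := by
          refine Finset.sum_congr rfl fun j hj => ?_
          rw [Finset.mul_sum]
          refine Finset.sum_congr rfl fun x hx => ?_
          rw [(Finset.mem_filter.mp hx).2]
      _ = ∑ x : Fin n, MvPolynomial.C (ε ^ (i * ((x : ℕ) % m) % m)) * X x := by
          exact Finset.sum_fiberwise_of_maps_to
            (fun x _ => Finset.mem_range.2 (Nat.mod_lt _ hmpos)) _
      _ = lam (i * (n / m)) := by
          refine Finset.sum_congr rfl fun x _ => ?_
          congr 2
          calc ε ^ (i * ((x : ℕ) % m) % m)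
              = ε ^ (i * ((x : ℕ) % m)) := aux_pow_mod hεm _
            _ = (ε ^ i) ^ ((x : ℕ) % m) := by rw [pow_mul]
            _ = (ε ^ i) ^ (x : ℕ) := aux_pow_mod hεim _
            _ = ε ^ (i * (x : ℕ)) := by rw [← pow_mul]
            _ = ζ ^ ((n / m) * (i * (x : ℕ))) := by rw [hεζ, ← pow_mul]
            _ = ζ ^ (i * (n / m) * (x : ℕ)) := by congr 1; ring
  -- Step B : regroup the product over `range n` by divisors
  rw [Finset.prod_congr rfl fun m hm =>
    Finset.prod_congr rfl fun i _ => hstepA m (Nat.mem_divisors.mp hm).1 i]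
  rw [← Finset.prod_fiberwise_of_maps_to
    (g := fun k => n / Nat.gcd n k) (t := n.divisors)
    (fun k _ => Nat.mem_divisors.2 ⟨Nat.div_dvd_of_dvd (Nat.gcd_dvd_left n k), hn0⟩) lam]
  refine Finset.prod_congr rfl fun m hm => ?_
  obtain ⟨hmdvd, -⟩ := Nat.mem_divisors.mp hm
  have hm0 : m ≠ 0 := by rintro rfl; exact hn0 (Nat.eq_zero_of_zero_dvd hmdvd)
  have hmpos : 0 < m := Nat.pos_of_ne_zero hm0
  set d : ℕ := n / m with hd
  have hmd : m * d = n := Nat.mul_div_cancel' hmdvd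
  have hdpos : 0 < d := Nat.div_pos (Nat.le_of_dvd hn hmdvd) hmpos
  have hfib : ∀ k ∈ (Finset.range n).filter (fun k => n / Nat.gcd n k = m),
      Nat.gcd n k = d := by
    intro k hk
    obtain ⟨-, hkg⟩ := Finset.mem_filter.mp hk
    have hgdvd : Nat.gcd n k ∣ n := Nat.gcd_dvd_left n k
    have hnm : n = Nat.gcd n k * m := Nat.eq_mul_of_div_eq_right hgdvd hkg
    have : m * Nat.gcd n k = m * d := by rw [mul_comm m (Nat.gcd n k), ← hnm, hmd]
    exact Nat.eq_of_mul_eq_mul_left hmpos this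
  refine Finset.prod_nbij' (fun k => k / d) (fun i => i * d) ?_ ?_ ?_ ?_ ?_
  · intro k hk
    have hg := hfib k hk
    obtain ⟨hkr, -⟩ := Finset.mem_filter.mp hk
    have hklt := Finset.mem_range.mp hkr
    have hddvd : d ∣ k := hg ▸ Nat.gcd_dvd_right n k
    refine Finset.mem_filter.mpr ⟨Finset.mem_range.mpr ?_, ?_⟩
    · exact (Nat.div_lt_iff_lt_mul hdpos).mpr (by rw [hmd]; exact hklt)
    · have h2 : Nat.gcd (m * d) (k / d * d) = d := by
        rw [Nat.div_mul_cancel hddvd, hmd]; exact hg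
      rw [Nat.gcd_mul_right] at h2
      have h3 : Nat.gcd m (k / d) = 1 := by
        have h4 : Nat.gcd m (k / d) * d = 1 * d := by rw [one_mul]; exact h2
        exact Nat.eq_of_mul_eq_mul_right hdpos h4
      exact Nat.coprime_comm.mp h3
  · intro i hi
    obtain ⟨hir, hicop⟩ := Finset.mem_filter.mp hi
    have hilt := Finset.mem_range.mp hir
    refine Finset.mem_filter.mpr ⟨Finset.mem_range.mpr ?_, ?_⟩
    · calc i * d < m * d := by exact mul_lt_mul_of_pos_right hilt hdpos
        _ = n := hmd
    · rw [← hmd, Nat.gcd_mul_right, Nat.Coprime.gcd_eq_one hicop.symm, one_mul,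
        Nat.mul_div_cancel m hdpos]
  · intro k hk
    have hddvd : d ∣ k := (hfib k hk) ▸ Nat.gcd_dvd_right n k
    exact Nat.div_mul_cancel hddvd
  · intro i _
    exact Nat.mul_div_cancel i hdpos
  · intro k hk
    have hddvd : d ∣ k := (hfib k hk) ▸ Nat.gcd_dvd_right n k
    rw [Nat.div_mul_cancel hddvd]
end
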